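/- Let (f, p̂) be a classifier, bin a binning function, (x_1,y_1),…,(x_N,y_N) ∈ X × Y a finite dataset, and (k_γ)_{γ>0} a family of kernels k_γ : X × X → (0,∞). Let x ∈ X satisfy β(x) ≠ ∅ and suppose k_γ(x, x_i) → 1 as γ → ∞ for every i ∈ β(x). Then LCE_γ(x) converges, as γ → ∞, to |(1/|β(x)|) Σ_{i∈β(x)} (p̂(x_i) − 1[f(x_i)=y_i])|, i.e., to the absolute difference between the average confidence and the average accuracy over the bin of x. -/

import Mathlib

open Filter

/-- As the kernel bandwidth `γ → ∞` (so that `k_γ(x, x_i) → 1` for every point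
`x_i` in the confidence bin of `x`), the local calibration error `LCE_γ(x)`
converges to the absolute difference between the average confidence and the
average accuracy over the bin of `x`. -/
theorem stmt_1 {X Y : Type*} [DecidableEq Y] (m : ℕ)
    (f : X → Y) (p : X → ℝ) (bin : ℝ → Fin m)
    (hp : ∀ x : X, 0 ≤ p x ∧ p x ≤ 1)
    (N : ℕ) (x : Fin N → X) (y : Fin N → Y)
    (k : ℝ → X → X → ℝ)
    (hk_pos : ∀ γ > (0:ℝ), ∀ a b : X, 0 < k γ a b)
    (x₀ : X)
    (hβ : (Finset.univ.filter fun i : Fin N => bin (p (x i)) = bin (p x₀)).Nonempty)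
    (hk_lim : ∀ i ∈ Finset.univ.filter fun i : Fin N => bin (p (x i)) = bin (p x₀),
      Tendsto (fun γ : ℝ => k γ x₀ (x i)) atTop (nhds 1)) :
    Tendsto
      (fun γ : ℝ =>
        |∑ i ∈ Finset.univ.filter fun i : Fin N => bin (p (x i)) = bin (p x₀),
            (p (x i) - if f (x i) = y i then (1:ℝ) else 0) * k γ x₀ (x i)| /
          ∑ i ∈ Finset.univ.filter fun i : Fin N => bin (p (x i)) = bin (p x₀),
            k γ x₀ (x i))
      atTop
      (nhds
        |(∑ i ∈ Finset.univ.filter fun i : Fin N => bin (p (x i)) = bin (p x₀),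
            (p (x i) - if f (x i) = y i then (1:ℝ) else 0)) /
          (Finset.univ.filter fun i : Fin N => bin (p (x i)) = bin (p x₀)).card|) := by
  set S := Finset.univ.filter fun i : Fin N => bin (p (x i)) = bin (p x₀) with hS
  set w : Fin N → ℝ := fun i => p (x i) - if f (x i) = y i then (1:ℝ) else 0 with hw
  have hnum : Tendsto (fun γ : ℝ => ∑ i ∈ S, w i * k γ x₀ (x i)) atTop
      (nhds (∑ i ∈ S, w i)) := by
    have := tendsto_finset_sum S (fun i hi =>
      (tendsto_const_nhds (x := w i)).mul (hk_lim i hi))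
    simpa using this
  have hden : Tendsto (fun γ : ℝ => ∑ i ∈ S, k γ x₀ (x i)) atTop
      (nhds (S.card : ℝ)) := by
    have := tendsto_finset_sum S (fun i hi => hk_lim i hi)
    simpa using this
  have hcard : (0:ℝ) < S.card := by exact_mod_cast Finset.card_pos.mpr hβ
  have := (hnum.abs).div hden hcard.ne'
  convert this using 2
  · rfl
  rw [abs_div, abs_of_pos hcard]
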